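/- If S has distribution Ψ_κ(μ, σ²), then E[(S − μ)·1(S ≥ κ)] = (σ² + κ − μ)·π_κ. -/

import Mathlib

open MeasureTheory Filter

/-- If `S` has distribution `Ψ_κ(μ, σ²)`, then
`E[(S - μ)·1(S ≥ κ)] = (σ² + κ - μ)·π_κ`. -/
theorem psi_tail_identity
    {Ω : Type*} [MeasurableSpace Ω] (P : Measure Ω) [IsProbabilityMeasure P]
    (S : Ω → ℤ) (hS : Measurable S)
    (μ σ2 : ℝ) (hσ : 0 < σ2) (κ : ℤ)
    (h1 : μ - σ2 < (κ : ℝ)) (h2 : (κ : ℝ) < μ + σ2 + 1)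
    (hint : Integrable (fun ω => (S ω : ℝ)) P)
    (hmean : ∫ ω, (S ω : ℝ) ∂P = μ)
    (hrec_up : ∀ j : ℤ, κ + 1 ≤ j →
      (σ2 + (j : ℝ) - μ) * (P {ω | S ω = j}).toReal
        = σ2 * (P {ω | S ω = j - 1}).toReal) :
    ∫ ω in {ω | κ ≤ S ω}, ((S ω : ℝ) - μ) ∂P
      = (σ2 + (κ : ℝ) - μ) * (P {ω | S ω = κ}).toReal := by
  set π : ℤ → ℝ := fun j => (P {ω | S ω = j}).toReal with hπdef
  set A : ℕ → Set Ω := fun n => {ω | S ω = κ + n} with hAdef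
  have hAmeas : ∀ n, MeasurableSet (A n) := fun n => hS (measurableSet_singleton _)
  have hdisj : Pairwise (Function.onFun Disjoint A) := by
    intro m n hmn
    simp only [Function.onFun, Set.disjoint_left, hAdef, Set.mem_setOf_eq]
    intro ω ha hb
    apply hmn
    have : (κ + (m : ℤ)) = κ + n := by rw [← ha, ← hb]
    omega
  have hUnion : ⋃ n, A n = {ω | κ ≤ S ω} := by
    ext ω
    simp only [Set.mem_iUnion, hAdef, Set.mem_setOf_eq]
    constructor
    · rintro ⟨n, hn⟩; omega
    · intro h; exact ⟨(S ω - κ).toNat, by omega⟩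
  have hf : IntegrableOn (fun ω => (S ω : ℝ) - μ) (⋃ n, A n) P :=
    (hint.sub (integrable_const μ)).integrableOn
  have hsum : HasSum (fun n : ℕ => ∫ ω in A n, ((S ω : ℝ) - μ) ∂P)
      (∫ ω in ⋃ n, A n, ((S ω : ℝ) - μ) ∂P) :=
    hasSum_integral_iUnion hAmeas hdisj hf
  have hval : ∀ n : ℕ, (∫ ω in A n, ((S ω : ℝ) - μ) ∂P)
      = ((κ : ℝ) + n - μ) * π (κ + n) := by
    intro n
    have hc : ∫ ω in A n, ((S ω : ℝ) - μ) ∂P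
        = ∫ _ω in A n, (((κ + n : ℤ) : ℝ) - μ) ∂P := by
      apply setIntegral_congr_fun (hAmeas n)
      intro ω hω
      simp only [hAdef, Set.mem_setOf_eq] at hω
      simp only [hω]
    rw [hc, setIntegral_const]
    simp only [hπdef, hAdef, smul_eq_mul, measureReal_def]
    push_cast
    ring
  -- summability of tail probabilities
  have hπ0 : Tendsto (fun n : ℕ => π (κ + n)) atTop (nhds 0) := by
    have hsummable : Summable (fun n : ℕ => π (κ + n)) := by
      have : (∑' n : ℕ, P (A n)) ≠ ⊤ := by
        rw [← measure_iUnion hdisj hAmeas]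
        exact (measure_lt_top P _).ne
      exact ENNReal.summable_toReal this
    exact hsummable.tendsto_atTop_zero
  -- recurrence in convenient form
  have key : ∀ n : ℕ, ((κ : ℝ) + n + 1 - μ) * π (κ + n + 1)
      = σ2 * π (κ + n) - σ2 * π (κ + n + 1) := by
    intro n
    have h := hrec_up (κ + n + 1) (by omega)
    have e : (κ + (n : ℤ) + 1) - 1 = κ + n := by ring
    rw [e] at h
    simp only [hπdef]
    push_cast at h ⊢
    linarith
  -- partial sums
  have hps : ∀ N : ℕ, ∑ n ∈ Finset.range (N + 1), ((κ : ℝ) + n - μ) * π (κ + n)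
      = (σ2 + (κ : ℝ) - μ) * π κ - σ2 * π (κ + N) := by
    intro N
    induction N with
    | zero => simp; ring
    | succ N ih =>
      rw [Finset.sum_range_succ, ih]
      have h := key N
      have e1 : ((κ : ℝ) + ((N : ℕ) + 1 : ℕ) - μ) = (κ : ℝ) + N + 1 - μ := by push_cast; ring
      have e2 : (κ + ((N : ℕ) + 1 : ℕ) : ℤ) = κ + N + 1 := by push_cast; ring
      rw [e1, e2, h]
      ring
  -- limits
  have hlim1 : Tendsto (fun N : ℕ => ∑ n ∈ Finset.range (N + 1),
      (∫ ω in A n, ((S ω : ℝ) - μ) ∂P)) atTop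
      (nhds (∫ ω in ⋃ n, A n, ((S ω : ℝ) - μ) ∂P)) :=
    hsum.tendsto_sum_nat.comp (tendsto_add_atTop_nat 1)
  have hlim2 : Tendsto (fun N : ℕ => ∑ n ∈ Finset.range (N + 1),
      (∫ ω in A n, ((S ω : ℝ) - μ) ∂P)) atTop
      (nhds ((σ2 + (κ : ℝ) - μ) * π κ)) := by
    have : (fun N : ℕ => ∑ n ∈ Finset.range (N + 1),
        (∫ ω in A n, ((S ω : ℝ) - μ) ∂P))
        = fun N : ℕ => (σ2 + (κ : ℝ) - μ) * π κ - σ2 * π (κ + N) := by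
      funext N
      rw [← hps N]
      exact Finset.sum_congr rfl fun n _ => hval n
    rw [this]
    have := (tendsto_const_nhds (x := (σ2 + (κ : ℝ) - μ) * π κ) (f := atTop (α := ℕ))).sub
      (hπ0.const_mul σ2)
    simpa using this
  have := tendsto_nhds_unique hlim1 hlim2
  rw [hUnion] at this
  exact this
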